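/- Consider the vector field on ℝ^5 with coordinates (x, y, y1, y2, y3, y4) given by X = y*∂_x - y1^2*∂_{y1} - 3*y1*y2*∂_{y2} - (4*y1*y3 + 3*y2^2)*∂_{y3} - (5*y1*y4 + 10*y2*y3)*∂_{y4}. Define R4 = 3*y2*y4 - 5*y3^2 and R2 = y2. Then X(R4) = -8*y1*R4 and X(R2) = -3*y1*R2; consequently, on the open set where y2 ≠ 0, the function I4 = R4^3/R2^8 satisfies X(I4) = 0. -/

import Mathlib

namespace Stmt5

/-- Points of the jet space with coordinates `(x, y, y1, y2, y3, y4)`. -/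
abbrev Pt := Fin 6 → ℝ

/-- The fourth prolongation of the point vector field `y ∂_x`:
`X = y ∂_x − y1² ∂_{y1} − 3 y1 y2 ∂_{y2} − (4 y1 y3 + 3 y2²) ∂_{y3} − (5 y1 y4 + 10 y2 y3) ∂_{y4}`.
Coordinates: `p 0 = x, p 1 = y, p 2 = y1, p 3 = y2, p 4 = y3, p 5 = y4`. -/
def X : Pt → Pt := fun p =>
  ![p 1, 0, -(p 2) ^ 2, -3 * p 2 * p 3, -(4 * p 2 * p 4 + 3 * (p 3) ^ 2),
    -(5 * p 2 * p 5 + 10 * p 3 * p 4)]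

/-- `R₄ = 3 y₂ y₄ − 5 y₃²`. -/
def R4 : Pt → ℝ := fun p => 3 * p 3 * p 5 - 5 * (p 4) ^ 2

/-- `R₂ = y₂`. -/
def R2 : Pt → ℝ := fun p => p 3

/-- `I₄ = R₄³ / R₂⁸`. -/
noncomputable def I4 : Pt → ℝ := fun p => (R4 p) ^ 3 / (R2 p) ^ 8

private lemma hasFDerivAt_pow_comp {E : Type*} [NormedAddCommGroup E] [NormedSpace ℝ E]
    {f : E → ℝ} {f' : E →L[ℝ] ℝ} {x : E} (hf : HasFDerivAt f f' x) (n : ℕ) :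
    HasFDerivAt (fun y => f y ^ n) (((n : ℝ) * f x ^ (n - 1)) • f') x := by
  induction n with
  | zero => simpa using hasFDerivAt_const (1 : ℝ) x
  | succ n ih =>
    have h := ih.mul hf
    simp only [Pi.mul_def, ← pow_succ] at h
    convert h using 1
    · rfl
    · rfl
    ext v
    rcases Nat.eq_zero_or_pos n with hn | hn
    · subst hn; simp
    · have h1 : n - 1 + 1 = n := Nat.succ_pred_eq_of_pos hn
      simp only [ContinuousLinearMap.add_apply, ContinuousLinearMap.smul_apply,
        smul_eq_mul, Nat.add_sub_cancel, Nat.cast_add, Nat.cast_one]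
      rw [← h1, pow_succ]
      push_cast [h1]
      ring

/-- `X(R₄) = −8 y₁ R₄`, `X(R₂) = −3 y₁ R₂`, and where `y₂ ≠ 0` the absolute
invariant `I₄ = R₄³/R₂⁸` satisfies `X(I₄) = 0`. -/
theorem relative_invariants_saff2 (p : Pt) :
    fderiv ℝ R4 p (X p) = -8 * p 2 * R4 p ∧
    fderiv ℝ R2 p (X p) = -3 * p 2 * R2 p ∧
    (p 3 ≠ 0 → fderiv ℝ I4 p (X p) = 0) := by
  have h3 := hasFDerivAt_apply (𝕜 := ℝ) (F' := fun _ : Fin 6 => ℝ) 3 p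
  have h4 := hasFDerivAt_apply (𝕜 := ℝ) (F' := fun _ : Fin 6 => ℝ) 4 p
  have h5 := hasFDerivAt_apply (𝕜 := ℝ) (F' := fun _ : Fin 6 => ℝ) 5 p
  have hR4 : HasFDerivAt R4 _ p :=
    ((h3.const_mul 3).mul h5).sub ((hasFDerivAt_pow_comp h4 2).const_mul 5)
  have hR2 : HasFDerivAt R2 _ p := h3
  have x3 : X p 3 = -3 * p 2 * p 3 := rfl
  have x4 : X p 4 = -(4 * p 2 * p 4 + 3 * (p 3) ^ 2) := rfl
  have x5 : X p 5 = -(5 * p 2 * p 5 + 10 * p 3 * p 4) := rfl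
  have e4 : fderiv ℝ R4 p (X p) = -8 * p 2 * R4 p := by
    rw [hR4.fderiv]
    simp only [ContinuousLinearMap.sub_apply, ContinuousLinearMap.add_apply,
      ContinuousLinearMap.smul_apply, ContinuousLinearMap.proj_apply, smul_eq_mul,
      x3, x4, x5, R4]
    push_cast
    ring
  have e2 : fderiv ℝ R2 p (X p) = -3 * p 2 * R2 p := by
    rw [hR2.fderiv]
    simp only [ContinuousLinearMap.proj_apply, x3, R2]
  refine ⟨e4, e2, fun hp => ?_⟩
  have hden_ne : R2 p ^ 8 ≠ 0 := by simpa [R2] using pow_ne_zero 8 hp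
  have hnum := hasFDerivAt_pow_comp hR4 3
  have hden := hasFDerivAt_pow_comp hR2 8
  have hinv : HasFDerivAt (fun q : Pt => (R2 q ^ 8)⁻¹) _ p :=
    (hasFDerivAt_inv hden_ne).comp p hden
  have hIeq : I4 = fun q => R4 q ^ 3 * (R2 q ^ 8)⁻¹ := by
    funext q; simp [I4, div_eq_mul_inv]
  rw [hIeq, show (fun q => R4 q ^ 3 * (R2 q ^ 8)⁻¹) = ((fun y => R4 y ^ 3) * fun q => (R2 q ^ 8)⁻¹) from rfl, (hnum.mul hinv).fderiv]
  simp only [ContinuousLinearMap.sub_apply, ContinuousLinearMap.add_apply,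
    ContinuousLinearMap.smul_apply, ContinuousLinearMap.comp_apply,
    ContinuousLinearMap.smulRight_apply, ContinuousLinearMap.one_apply,
    ContinuousLinearMap.toSpanSingleton_apply,
    ContinuousLinearMap.proj_apply, smul_eq_mul, x3, x4, x5, R4, R2]
  have h2 : p 3 ^ 2 ≠ 0 := pow_ne_zero 2 hp
  field_simp
  ring

end Stmt5
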